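/- Let T_{α,r} denote the self-adjoint operator f ↦ −f'' in L²(0,r) with domain {f ∈ H²(0,r) : f'(0) = −α f(0), f(r) = 0}, generated by the closed form t_{α,r}(f,f) = ∫₀^r |f'(t)|² dt − α|f(0)|² on {f ∈ H¹(0,r) : f(r) = 0}. If rα → +∞, then T_{α,r} has a unique negative eigenvalue, and E₁(T_{α,r}) = −α² + O(α² e^{−rα}) as rα → +∞. Furthermore, if ψ is an associated L²-normalized eigenfunction, then |ψ(0)|² = 2α + O(α e^{−rα}) as rα → +∞. -/

import Mathlib

open MeasureTheory Set Filter Topology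

noncomputable section

/-- Courant–Fischer min–max value of index `n` (the `n`-th eigenvalue, `n ≥ 1`, counted
with multiplicities) of the quadratic form `q` defined on the form core `dom`, relative
to the squared-`L²`-norm form `N`, inside an ambient real vector space `H`. -/
def minmaxE {H : Type*} [AddCommGroup H] [Module ℝ H]
    (dom : Set H) (N q : H → ℝ) (n : ℕ) : ℝ :=
  sInf {E : ℝ | ∃ V : Submodule ℝ H, (V : Set H) ⊆ dom ∧ Module.finrank ℝ ↥V = n ∧
    (∀ u ∈ V, N u = 0 → u = 0) ∧ ∀ u ∈ V, q u ≤ E * N u}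

/-- Form core for `T_{α,r}` on `(0,r)` (Dirichlet at `r`). -/
def domRD (r : ℝ) : Set (ℝ → ℝ) := {f | ContDiff ℝ 1 f ∧ ∀ t, r ≤ t → f t = 0}

/-- Squared `L²(0,r)`-norm. -/
def NI (r : ℝ) (f : ℝ → ℝ) : ℝ := ∫ t in (0:ℝ)..r, (f t) ^ 2

/-- The form `t_{α,r}(f) = ∫₀^r |f'|² - α |f(0)|²` of the Robin–Dirichlet operator `T_{α,r}`. -/
def tForm (α r : ℝ) (f : ℝ → ℝ) : ℝ := (∫ t in (0:ℝ)..r, (deriv f t) ^ 2) - α * (f 0) ^ 2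

/-- `E_n(T_{α,r})`, the `n`-th min-max eigenvalue of `T_{α,r}`. -/
def ET1 (α r : ℝ) (n : ℕ) : ℝ := minmaxE (domRD r) (NI r) (tForm α r) n

end


open Asymptotics

set_option maxHeartbeats 1000000

/-- FTC: ∫ 2 f f' = f(r)^2 - f(0)^2 -/
lemma ftc_sq (f : ℝ → ℝ) (hf : Differentiable ℝ f) (hc : Continuous (deriv f)) (r : ℝ) :
    ∫ t in (0:ℝ)..r, (2 * f t * deriv f t) = (f r)^2 - (f 0)^2 := by
  apply intervalIntegral.integral_eq_sub_of_hasDerivAt (f := fun t => (f t)^2)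
  · intro t _
    simpa using ((hf t).hasDerivAt.fun_pow 2)
  · exact ((continuous_const.mul (hf.continuous)).mul hc).intervalIntegrable _ _

lemma lemB (f : ℝ → ℝ) (hf : Differentiable ℝ f) (hc : Continuous (deriv f)) (α r : ℝ) :
    ∫ t in (0:ℝ)..r, (deriv f t + α * f t)^2
      = (∫ t in (0:ℝ)..r, (deriv f t)^2) + α * ((f r)^2 - (f 0)^2)
        + α^2 * ∫ t in (0:ℝ)..r, (f t)^2 := by
  have h1 : ∀ t, (deriv f t + α * f t)^2
      = (deriv f t)^2 + α * (2 * f t * deriv f t) + α^2 * (f t)^2 := by intro t; ring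
  have hi1 : IntervalIntegrable (fun t => (deriv f t)^2) volume 0 r :=
    (hc.pow 2).intervalIntegrable _ _
  have hi2 : IntervalIntegrable (fun t => α * (2 * f t * deriv f t)) volume 0 r :=
    (continuous_const.mul ((continuous_const.mul hf.continuous).mul hc)).intervalIntegrable _ _
  have hi3 : IntervalIntegrable (fun t => α^2 * (f t)^2) volume 0 r :=
    (continuous_const.mul (hf.continuous.pow 2)).intervalIntegrable _ _
  calc ∫ t in (0:ℝ)..r, (deriv f t + α * f t)^2
      = ∫ t in (0:ℝ)..r, ((deriv f t)^2 + α * (2 * f t * deriv f t) + α^2 * (f t)^2) := by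
        simp_rw [h1]
    _ = (∫ t in (0:ℝ)..r, (deriv f t)^2) + (∫ t in (0:ℝ)..r, α * (2 * f t * deriv f t))
          + ∫ t in (0:ℝ)..r, α^2 * (f t)^2 := by
        rw [intervalIntegral.integral_add (hi1.add hi2) hi3, intervalIntegral.integral_add hi1 hi2]
    _ = _ := by
        rw [intervalIntegral.integral_const_mul, intervalIntegral.integral_const_mul,
          ftc_sq f hf hc r]

lemma piecewise_hasDeriv (g : ℝ → ℝ) (r : ℝ) (hgd : Differentiable ℝ g)
    (hgr : g r = 0) (hgr' : deriv g r = 0) (t : ℝ) :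
    HasDerivAt (fun s => if s ≤ r then g s else 0)
        (if t ≤ r then deriv g t else 0) t := by
  rcases lt_trichotomy t r with h | h | h
  · have hev : (fun s => if s ≤ r then g s else 0) =ᶠ[nhds t] g := by
      filter_upwards [Iio_mem_nhds h] with s hs
      exact if_pos (le_of_lt hs)
    rw [if_pos h.le]
    exact (hgd t).hasDerivAt.congr_of_eventuallyEq hev
  · subst h
    rw [if_pos le_rfl, hgr']
    rw [hasDerivAt_iff_isLittleO]
    have hgo : HasDerivAt g 0 t := by rw [← hgr']; exact (hgd t).hasDerivAt
    rw [hasDerivAt_iff_isLittleO] at hgo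
    have hbig : (fun s => (if s ≤ t then g s else 0) - (if t ≤ t then g t else 0) - (s - t) • (0:ℝ))
        =O[nhds t] (fun s => g s - g t - (s - t) • (0:ℝ)) := by
      apply isBigO_of_le
      intro s
      rw [if_pos le_rfl, hgr]
      by_cases hs : s ≤ t
      · rw [if_pos hs]
      · rw [if_neg hs]
        simp
    exact hbig.trans_isLittleO hgo
  · have hev : (fun s => if s ≤ r then g s else 0) =ᶠ[nhds t] (fun _ => (0:ℝ)) := by
      filter_upwards [Ioi_mem_nhds h] with s hs
      exact if_neg (not_le.mpr hs)
    rw [if_neg (not_le.mpr h)]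
    exact (hasDerivAt_const t (0:ℝ)).congr_of_eventuallyEq hev

lemma piecewise_deriv_cont (g : ℝ → ℝ) (r : ℝ) (hgc : Continuous (deriv g))
    (hgr' : deriv g r = 0) :
    Continuous (fun t => if t ≤ r then deriv g t else 0) := by
  rw [continuous_iff_continuousAt]
  intro t
  rcases lt_trichotomy t r with h | h | h
  · have hev : (fun t => if t ≤ r then deriv g t else 0) =ᶠ[nhds t] (deriv g) := by
      filter_upwards [Iio_mem_nhds h] with s hs
      exact if_pos (le_of_lt hs)
    exact (hgc.continuousAt).congr hev.symm
  · have hdt : (if t ≤ r then deriv g t else 0) = 0 := by rw [h, hgr']; simp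
    rw [ContinuousAt, hdt]
    apply squeeze_zero_norm (a := fun s => ‖deriv g s‖)
    · intro s
      by_cases hs : s ≤ r
      · rw [if_pos hs]
      · rw [if_neg hs]; simp
    · have h2 : Filter.Tendsto (deriv g) (nhds t) (nhds (0:ℝ)) := by
        rw [h]
        have := hgc.continuousAt (x := r)
        rwa [ContinuousAt, hgr'] at this
      simpa using h2.norm
  · have hev : (fun t => if t ≤ r then deriv g t else 0) =ᶠ[nhds t] (fun _ => (0:ℝ)) := by
      filter_upwards [Ioi_mem_nhds h] with s hs
      exact if_neg (not_le.mpr hs)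
    exact (continuousAt_const).congr hev.symm

lemma kappa_facts (X : ℝ) (hX : 11 ≤ X) :
    (1 + X) * Real.exp (-X) ≤ 1/4 ∧ X^3 * Real.exp (-X) ≤ 6 ∧
    X^4 * Real.exp (-X) ≤ 24 ∧ X^6 * Real.exp (-X) ≤ 720 := by
  have hX0 : (0:ℝ) ≤ X := by linarith
  have hexp : (0:ℝ) < Real.exp X := Real.exp_pos X
  have hk : Real.exp (-X) * Real.exp X = 1 := by
    rw [← Real.exp_add]; simp
  have hk0 : 0 < Real.exp (-X) := Real.exp_pos _
  have p2 : X^2 / 2 ≤ Real.exp X := by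
    have := Real.pow_div_factorial_le_exp X hX0 2
    norm_num [Nat.factorial] at this; linarith
  have p3 : X^3 / 6 ≤ Real.exp X := by
    have := Real.pow_div_factorial_le_exp X hX0 3
    norm_num [Nat.factorial] at this; linarith
  have p4 : X^4 / 24 ≤ Real.exp X := by
    have := Real.pow_div_factorial_le_exp X hX0 4
    norm_num [Nat.factorial] at this; linarith
  have p6 : X^6 / 720 ≤ Real.exp X := by
    have := Real.pow_div_factorial_le_exp X hX0 6
    norm_num [Nat.factorial] at this; linarith
  have q2 : X^2 * Real.exp (-X) ≤ 2 := by nlinarith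
  have q3 : X^3 * Real.exp (-X) ≤ 6 := by nlinarith
  have q4 : X^4 * Real.exp (-X) ≤ 24 := by nlinarith
  have q6 : X^6 * Real.exp (-X) ≤ 720 := by nlinarith
  refine ⟨?_, q3, q4, q6⟩
  -- (1+X) exp(-X) ≤ 1/4 : from X² exp(-X) ≤ 2 and X ≥ 11 : (1+X) ≤ X²/8
  have h8 : 8 * (1 + X) ≤ X^2 := by nlinarith
  nlinarith [mul_le_mul_of_nonneg_right h8 hk0.le]

lemma trial_bound (α r : ℝ) (hα : 0 < α) (hr : 0 < r) (hX : 11 ≤ r * α) :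
    ∃ f : ℝ → ℝ, f ∈ domRD r ∧ Differentiable ℝ f ∧
      tForm α r f + α^2 * NI r f = α^4 * Real.exp (-(α*r))^2 * r^3 / 3 ∧
      1/(32*α) ≤ NI r f := by
  set ε := Real.exp (-(α*r)) with hε
  set g : ℝ → ℝ := fun t => Real.exp (-(α*t)) - ε - α * ε * (r - t) with hg
  have h1 : ∀ t, HasDerivAt g (-(α * Real.exp (-(α*t))) + α * ε) t := by
    intro t
    have e1 : HasDerivAt (fun t : ℝ => -(α*t)) (-α) t := by
      simpa using ((hasDerivAt_id' t).const_mul α).fun_neg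
    have e2 : HasDerivAt (fun t : ℝ => Real.exp (-(α*t))) (Real.exp (-(α*t)) * -α) t := e1.exp
    have e3 : HasDerivAt (fun t : ℝ => r - t) (0 - 1) t :=
      (hasDerivAt_const t r).sub (hasDerivAt_id t)
    have e4 : HasDerivAt (fun t : ℝ => α * ε * (r - t)) (α * ε * (0 - 1)) t := e3.const_mul _
    have := (e2.fun_sub (hasDerivAt_const t ε)).fun_sub e4
    exact this.congr_deriv (by ring)
  have hgd : Differentiable ℝ g := fun t => (h1 t).differentiableAt
  have hgderiv : deriv g = fun t => -(α * Real.exp (-(α*t))) + α * ε :=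
    funext fun t => (h1 t).deriv
  have hgc : Continuous (deriv g) := by
    rw [hgderiv]; continuity
  have hgr : g r = 0 := by simp [hg, hε]
  have hgr' : deriv g r = 0 := by rw [hgderiv]; simp [hε]
  set f : ℝ → ℝ := fun s => if s ≤ r then g s else 0 with hfdef
  have hfd : ∀ t, HasDerivAt f (if t ≤ r then deriv g t else 0) t :=
    piecewise_hasDeriv g r hgd hgr hgr'
  have hfdc : Continuous (fun t => if t ≤ r then deriv g t else 0) :=
    piecewise_deriv_cont g r hgc hgr'
  have hfderiv : deriv f = fun t => if t ≤ r then deriv g t else 0 :=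
    funext fun t => (hfd t).deriv
  have hfdiff : Differentiable ℝ f := fun t => (hfd t).differentiableAt
  have hfC : ContDiff ℝ 1 f := contDiff_one_iff_deriv.mpr ⟨hfdiff, by rw [hfderiv]; exact hfdc⟩
  have hfr : f r = 0 := by simp [hfdef, hgr]
  have hdom : f ∈ domRD r := by
    refine ⟨hfC, fun t ht => ?_⟩
    by_cases h : t ≤ r
    · have : t = r := le_antisymm h ht
      rw [this]; exact hfr
    · exact if_neg h
  -- numeric facts
  set X := r * α with hXdef
  have hX0 : (0:ℝ) < X := by nlinarith
  have hκ := kappa_facts X hX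
  have hεX : ε = Real.exp (-X) := by rw [hε, hXdef, mul_comm]
  have hε0 : 0 < ε := Real.exp_pos _
  -- key integral identity
  have hEq : ∀ t ∈ Set.uIcc (0:ℝ) r, (deriv f t + α * f t)^2 = α^4 * ε^2 * (r - t)^2 := by
    intro t ht
    rw [Set.uIcc_of_le hr.le] at ht
    have htr : t ≤ r := ht.2
    rw [hfderiv]
    simp only [if_pos htr, hgderiv]
    simp only [hfdef, if_pos htr, hg]
    ring
  have hI1 : ∫ t in (0:ℝ)..r, (deriv f t + α * f t)^2 = α^4 * ε^2 * r^3 / 3 := by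
    rw [intervalIntegral.integral_congr hEq]
    rw [intervalIntegral.integral_const_mul]
    have : ∫ t in (0:ℝ)..r, (r - t)^2 = r^3/3 := by
      have h := intervalIntegral.integral_comp_sub_left (a := (0:ℝ)) (b := r)
        (fun u => u^2) r
      simp only [sub_zero, sub_self] at h
      rw [h, integral_pow]
      norm_num
    rw [this]; ring
  have hkey : tForm α r f + α^2 * NI r f = α^4 * ε^2 * r^3 / 3 := by
    have hB := lemB f hfdiff (by rw [hfderiv]; exact hfdc) α r
    rw [hfr] at hB
    rw [tForm, NI]
    rw [hI1] at hB
    linarith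
  -- lower bound on NI
  set s : ℝ := 1/(2*α) with hs
  have hs0 : 0 < s := by positivity
  have hsr : s ≤ r := by
    rw [hs, div_le_iff₀ (by positivity)]
    nlinarith
  have hsq : Real.exp (1/2:ℝ) * Real.exp (1/2:ℝ) = Real.exp 1 := by
    rw [← Real.exp_add]; norm_num
  have hexphalf : Real.exp (1/2 : ℝ) ≤ 5/3 := by
    nlinarith [Real.exp_one_lt_d9, Real.exp_pos (1/2:ℝ), hsq]
  have hpt : ∀ t ∈ Set.Icc (0:ℝ) s, (1/4 : ℝ) ≤ f t := by
    intro t ht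
    have htr : t ≤ r := le_trans ht.2 hsr
    rw [hfdef]
    simp only [if_pos htr, hg]
    have h1 : Real.exp (-(1/2) : ℝ) ≤ Real.exp (-(α * t)) := by
      apply Real.exp_le_exp.mpr
      rw [neg_le_neg_iff]
      calc α * t ≤ α * s := by nlinarith [ht.2, hα.le]
        _ = 1/2 := by rw [hs]; field_simp
    have h2 : (3/5 : ℝ) ≤ Real.exp (-(1/2) : ℝ) := by
      rw [Real.exp_neg]
      have h5 := Real.exp_pos (1/2:ℝ)
      have h6 : Real.exp (1/2:ℝ) * (Real.exp (1/2:ℝ))⁻¹ = 1 := mul_inv_cancel₀ h5.ne'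
      nlinarith
    have h3 : ε + α * ε * (r - t) ≤ ε * (1 + X) := by
      have : α * (r - t) ≤ α * r := by nlinarith [ht.1]
      have hrt : α * ε * (r - t) ≤ ε * X := by
        rw [hXdef]; nlinarith
      linarith
    have h4 : ε * (1 + X) ≤ 1/4 := by
      rw [hεX]; linarith [hκ.1, mul_comm (Real.exp (-X)) (1+X)]
    linarith [h1.trans' h2]
  have hint : Continuous f := hfdiff.continuous
  have hsplit : NI r f = (∫ t in (0:ℝ)..s, (f t)^2) + ∫ t in s..r, (f t)^2 := by
    rw [NI]
    exact (intervalIntegral.integral_add_adjacent_intervals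
      ((hint.pow 2).intervalIntegrable 0 s) ((hint.pow 2).intervalIntegrable s r)).symm
  have h2nn : 0 ≤ ∫ t in s..r, (f t)^2 :=
    intervalIntegral.integral_nonneg hsr (fun t _ => sq_nonneg _)
  have hlow : 1/(32*α) ≤ ∫ t in (0:ℝ)..s, (f t)^2 := by
    have hmono : ∫ t in (0:ℝ)..s, ((1:ℝ)/4)^2 ≤ ∫ t in (0:ℝ)..s, (f t)^2 := by
      apply intervalIntegral.integral_mono_on hs0.le
        (intervalIntegrable_const) ((hint.pow 2).intervalIntegrable 0 s)
      intro t ht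
      have := hpt t ht
      simp only [Pi.pow_apply]
      nlinarith
    rw [intervalIntegral.integral_const] at hmono
    have : (s - 0) • ((1:ℝ)/4)^2 = 1/(32*α) := by
      rw [hs]; simp [smul_eq_mul]; field_simp; ring
    rw [this] at hmono
    exact hmono
  exact ⟨f, hdom, hfdiff, hkey, by linarith⟩

-- Lemma A: form lower bound on the core
lemma formLB (α r : ℝ) (hr : 0 ≤ r) (u : ℝ → ℝ) (hu : ContDiff ℝ 1 u) (hur : u r = 0) :
    -(α^2) * NI r u ≤ tForm α r u := by
  have hud : Differentiable ℝ u := hu.differentiable one_ne_zero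
  have huc : Continuous (deriv u) := hu.continuous_deriv le_rfl
  have hB := lemB u hud huc α r
  rw [hur] at hB
  have hnn : 0 ≤ ∫ t in (0:ℝ)..r, (deriv u t + α * u t)^2 :=
    intervalIntegral.integral_nonneg hr (fun t _ => sq_nonneg _)
  rw [tForm, NI]
  nlinarith [hB, hnn]

lemma NI_nonneg (r : ℝ) (hr : 0 ≤ r) (u : ℝ → ℝ) : 0 ≤ NI r u :=
  intervalIntegral.integral_nonneg hr (fun t _ => sq_nonneg _)

lemma NI_smul (r c : ℝ) (f : ℝ → ℝ) : NI r (c • f) = c^2 * NI r f := by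
  rw [NI, NI, ← intervalIntegral.integral_const_mul]
  congr 1; funext t
  simp [Pi.smul_apply, smul_eq_mul]; ring

lemma tForm_smul (α r c : ℝ) (f : ℝ → ℝ) (hf : Differentiable ℝ f) :
    tForm α r (c • f) = c^2 * tForm α r f := by
  rw [tForm, tForm]
  have hd : ∀ t, deriv (c • f) t = c * deriv f t := by
    intro t
    have : (c • f) = fun y => c * f y := by funext y; simp [Pi.smul_apply, smul_eq_mul]
    rw [this, deriv_const_mul c (hf t)]
  have : ∫ t in (0:ℝ)..r, (deriv (c • f) t)^2 = c^2 * ∫ t in (0:ℝ)..r, (deriv f t)^2 := by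
    rw [← intervalIntegral.integral_const_mul]
    congr 1; funext t; rw [hd t]; ring
  rw [this]
  simp [Pi.smul_apply, smul_eq_mul]
  ring

-- lower bound for every admissible E (any n ≥ 1)
lemma mem_lb (α r : ℝ) (hα : 0 < α) (hr : 0 < r) (n : ℕ) (hn : 0 < n) (E : ℝ)
    (hE : E ∈ {E : ℝ | ∃ V : Submodule ℝ (ℝ → ℝ), (V : Set (ℝ → ℝ)) ⊆ domRD r ∧
      Module.finrank ℝ ↥V = n ∧ (∀ u ∈ V, NI r u = 0 → u = 0) ∧
      ∀ u ∈ V, tForm α r u ≤ E * NI r u}) :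
    -(α^2) ≤ E := by
  obtain ⟨V, hVdom, hVrank, hVnd, hVq⟩ := hE
  have : FiniteDimensional ℝ V := Module.finite_of_finrank_pos (by rw [hVrank]; exact hn)
  have hnt : Nontrivial V := Module.nontrivial_of_finrank_pos (R := ℝ) (by rw [hVrank]; exact hn)
  obtain ⟨w, hw⟩ := exists_ne (0 : V)
  set u : ℝ → ℝ := (w : ℝ → ℝ) with hu
  have huV : u ∈ V := w.2
  have hu0 : u ≠ 0 := by
    intro h
    apply hw
    exact Subtype.ext h
  have hudom := hVdom huV
  have hNpos : 0 < NI r u := by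
    rcases lt_or_eq_of_le (NI_nonneg r hr.le u) with h | h
    · exact h
    · exact absurd (hVnd u huV h.symm) hu0
  have h1 := formLB α r hr.le u hudom.1 (hudom.2 r le_rfl)
  have h2 := hVq u huV
  nlinarith

-- the membership of the trial Rayleigh quotient
lemma mem_S1 (α r : ℝ) (hr : 0 < r) (f : ℝ → ℝ) (hdom : f ∈ domRD r)
    (hfd : Differentiable ℝ f) (hN : 0 < NI r f) :
    tForm α r f / NI r f ∈ {E : ℝ | ∃ V : Submodule ℝ (ℝ → ℝ),
      (V : Set (ℝ → ℝ)) ⊆ domRD r ∧ Module.finrank ℝ ↥V = 1 ∧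
      (∀ u ∈ V, NI r u = 0 → u = 0) ∧ ∀ u ∈ V, tForm α r u ≤ E * NI r u} := by
  have hf0 : f ≠ 0 := by
    intro h
    rw [h] at hN
    simp [NI] at hN
  refine ⟨Submodule.span ℝ {f}, ?_, ?_, ?_, ?_⟩
  · intro u hu
    rw [SetLike.mem_coe, Submodule.mem_span_singleton] at hu
    obtain ⟨c, rfl⟩ := hu
    exact ⟨hdom.1.const_smul c, fun t ht => by simp [Pi.smul_apply, hdom.2 t ht]⟩
  · exact finrank_span_singleton hf0
  · intro u hu hNu
    rw [Submodule.mem_span_singleton] at hu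
    obtain ⟨c, rfl⟩ := hu
    rw [NI_smul] at hNu
    have : c = 0 := by
      rcases mul_eq_zero.mp hNu with h | h
      · exact pow_eq_zero_iff (n := 2) (by norm_num) |>.mp h
      · exact absurd h hN.ne'
    rw [this, zero_smul]
  · intro u hu
    rw [Submodule.mem_span_singleton] at hu
    obtain ⟨c, rfl⟩ := hu
    rw [NI_smul, tForm_smul α r c f hfd]
    rw [show (tForm α r f / NI r f) * (c^2 * NI r f) = c^2 * tForm α r f by
      field_simp]

-- n = 2 nonnegativity
lemma ET2_nonneg (α r : ℝ) (hα : 0 < α) (hr : 0 < r) : 0 ≤ ET1 α r 2 := by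
  rw [ET1, minmaxE]
  apply Real.sInf_nonneg
  rintro E ⟨V, hVdom, hVrank, hVnd, hVq⟩
  by_contra hneg
  push_neg at hneg
  have : FiniteDimensional ℝ V := Module.finite_of_finrank_pos (by rw [hVrank]; norm_num)
  -- evaluation at 0 as a linear map on V
  set φ : V →ₗ[ℝ] ℝ := (LinearMap.proj (0:ℝ)).comp V.subtype with hφ
  have hker : 0 < Module.finrank ℝ (LinearMap.ker φ) := by
    have hrn := LinearMap.finrank_range_add_finrank_ker φ
    have hle : Module.finrank ℝ (LinearMap.range φ) ≤ 1 := by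
      have := Submodule.finrank_le (LinearMap.range φ)
      simpa using this
    omega
  have : Nontrivial (LinearMap.ker φ) := Module.nontrivial_of_finrank_pos (R := ℝ) hker
  obtain ⟨w, hw⟩ := exists_ne (0 : LinearMap.ker φ)
  set u : ℝ → ℝ := ((w : V) : ℝ → ℝ) with hu
  have huV : u ∈ V := (w : V).2
  have hu0ne : u ≠ 0 := by
    intro h
    exact hw (Subtype.ext (Subtype.ext h))
  have hu00 : u 0 = 0 := w.2
  have hNpos : 0 < NI r u := by
    rcases lt_or_eq_of_le (NI_nonneg r hr.le u) with h | h
    · exact h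
    · exact absurd (hVnd u huV h.symm) hu0ne
  have hq : 0 ≤ tForm α r u := by
    rw [tForm, hu00]
    simp only [ne_eq, OfNat.ofNat_ne_zero, not_false_eq_true, zero_pow, mul_zero, sub_zero]
    exact intervalIntegral.integral_nonneg hr.le (fun t _ => sq_nonneg _)
  have := hVq u huV
  nlinarith

lemma psi_identity (α r E : ℝ) (hα : 0 < α) (hr : 0 < r) (ψ : ℝ → ℝ)
    (hψ : ContDiff ℝ 2 ψ) (hψr : ψ r = 0) (hψ0 : deriv ψ 0 = -α * ψ 0)
    (hode : ∀ t ∈ Set.Ioo (0:ℝ) r, -(iteratedDeriv 2 ψ t) = E * ψ t)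
    (hN : NI r ψ = 1) :
    ψ 0 ^ 2 * (α - r * (E + α^2)) = 2*α^2 - 2*(E + α^2) := by
  have hψ1 : ContDiff ℝ 1 ψ := hψ.of_le (by norm_num)
  have hd1 : Differentiable ℝ ψ := hψ1.differentiable one_ne_zero
  have hsucc := (contDiff_succ_iff_deriv (n := 1)).mp (by norm_num; exact hψ)
  have hdC : ContDiff ℝ 1 (deriv ψ) := hsucc.2.2
  have hd2 : Differentiable ℝ (deriv ψ) := hdC.differentiable one_ne_zero
  have hc2 : Continuous (deriv (deriv ψ)) := hdC.continuous_deriv le_rfl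
  have hψc : Continuous ψ := hd1.continuous
  have hdc : Continuous (deriv ψ) := hd2.continuous
  have hit2 : iteratedDeriv 2 ψ = deriv (deriv ψ) := by
    rw [show (2:ℕ) = 1 + 1 from rfl, iteratedDeriv_succ, iteratedDeriv_one]
  have hIoo : Set.EqOn (deriv (deriv ψ)) (fun t => -(E * ψ t)) (Set.Ioo 0 r) := by
    intro t ht
    have := hode t ht
    rw [hit2] at this
    simp only
    linarith
  have hIcc : Set.EqOn (deriv (deriv ψ)) (fun t => -(E * ψ t)) (Set.Icc 0 r) := by
    have := hIoo.closure hc2 (by continuity)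
    rwa [closure_Ioo hr.ne] at this
  -- integration by parts
  have hdd : ∀ t ∈ Set.uIcc (0:ℝ) r, HasDerivAt (fun s => ψ s * deriv ψ s)
      (deriv ψ t * deriv ψ t + ψ t * deriv (deriv ψ) t) t := by
    intro t _
    exact (hd1 t).hasDerivAt.mul (hd2 t).hasDerivAt
  have hIBP : ∫ t in (0:ℝ)..r, (deriv ψ t * deriv ψ t + ψ t * deriv (deriv ψ) t)
      = ψ r * deriv ψ r - ψ 0 * deriv ψ 0 := by
    apply intervalIntegral.integral_eq_sub_of_hasDerivAt hdd
    exact ((hdc.mul hdc).add (hψc.mul hc2)).intervalIntegrable _ _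
  rw [hψr, hψ0] at hIBP
  have hsplit : ∫ t in (0:ℝ)..r, (deriv ψ t * deriv ψ t + ψ t * deriv (deriv ψ) t)
      = (∫ t in (0:ℝ)..r, deriv ψ t * deriv ψ t) + ∫ t in (0:ℝ)..r, ψ t * deriv (deriv ψ) t := by
    apply intervalIntegral.integral_add
    · exact (hdc.mul hdc).intervalIntegrable _ _
    · exact (hψc.mul hc2).intervalIntegrable _ _
  have hsecond : ∫ t in (0:ℝ)..r, ψ t * deriv (deriv ψ) t = -E := by
    have hcg : Set.EqOn (fun t => ψ t * deriv (deriv ψ) t) (fun t => -E * (ψ t)^2)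
        (Set.uIcc (0:ℝ) r) := by
      intro t ht
      rw [Set.uIcc_of_le hr.le] at ht
      simp only
      rw [hIcc ht]
      ring
    rw [intervalIntegral.integral_congr hcg, intervalIntegral.integral_const_mul]
    rw [show (∫ t in (0:ℝ)..r, (ψ t)^2) = NI r ψ from rfl, hN]
    ring
  have h1 : ∫ t in (0:ℝ)..r, deriv ψ t * deriv ψ t = α * (ψ 0)^2 + E := by
    rw [hsplit, hsecond] at hIBP
    nlinarith [hIBP]
  -- constancy of G
  set G : ℝ → ℝ := fun t => deriv ψ t * deriv ψ t + E * (ψ t * ψ t) with hG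
  have hGconst : ∀ x ∈ Set.Icc (0:ℝ) r, G x = G 0 := by
    intro x hx
    have hzero : ∫ t in (0:ℝ)..x, (0:ℝ) = G x - G 0 := by
      apply intervalIntegral.integral_eq_sub_of_hasDerivAt
      · intro t ht
        rw [Set.uIcc_of_le hx.1] at ht
        have htIcc : t ∈ Set.Icc (0:ℝ) r := ⟨ht.1, le_trans ht.2 hx.2⟩
        have hda : HasDerivAt G (deriv (deriv ψ) t * deriv ψ t + deriv ψ t * deriv (deriv ψ) t
            + E * (deriv ψ t * ψ t + ψ t * deriv ψ t)) t := by
          exact ((hd2 t).hasDerivAt.mul (hd2 t).hasDerivAt).add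
            (((hd1 t).hasDerivAt.mul (hd1 t).hasDerivAt).const_mul E)
        have hval : deriv (deriv ψ) t * deriv ψ t + deriv ψ t * deriv (deriv ψ) t
            + E * (deriv ψ t * ψ t + ψ t * deriv ψ t) = 0 := by
          rw [hIcc htIcc]
          ring
        rwa [hval] at hda
      · exact intervalIntegrable_const
    simp at hzero
    linarith
  have hGint : ∫ t in (0:ℝ)..r, G t = r * G 0 := by
    have hcg : Set.EqOn G (fun _ => G 0) (Set.uIcc (0:ℝ) r) := by
      intro t ht
      rw [Set.uIcc_of_le hr.le] at ht
      exact hGconst t ht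
    rw [intervalIntegral.integral_congr hcg, intervalIntegral.integral_const]
    simp [smul_eq_mul]
  have hGsplit : ∫ t in (0:ℝ)..r, G t
      = (∫ t in (0:ℝ)..r, deriv ψ t * deriv ψ t) + E * ∫ t in (0:ℝ)..r, (ψ t)^2 := by
    rw [hG]
    rw [intervalIntegral.integral_add ((hdc.fun_mul hdc).intervalIntegrable _ _)
      ((continuous_const.fun_mul (hψc.fun_mul hψc)).intervalIntegrable _ _)]
    rw [intervalIntegral.integral_const_mul]
    have : ∫ (x : ℝ) in (0:ℝ)..r, ψ x * ψ x = ∫ (t : ℝ) in (0:ℝ)..r, ψ t ^ 2 := by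
      apply intervalIntegral.integral_congr
      intro t _
      simp only
      ring
    rw [this]
  have hNψ : (∫ t in (0:ℝ)..r, (ψ t)^2) = 1 := hN
  have hG0 : G 0 = α^2 * (ψ 0)^2 + E * ((ψ 0)^2) := by
    rw [hG]
    simp only
    rw [hψ0]
    ring
  have hfinal : α * (ψ 0)^2 + E + E * 1 = r * (α^2 * (ψ 0)^2 + E * (ψ 0)^2) := by
    rw [← h1, ← hNψ]
    rw [← hG0, ← hGint, hGsplit, hNψ]
  linear_combination hfinal

/-- If `rα → +∞`, then `T_{α,r}` has a unique negative eigenvalue,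
`E₁(T_{α,r}) = -α² + O(α² e^{-rα})`, and every associated `L²`-normalized eigenfunction `ψ`
satisfies `|ψ(0)|² = 2α + O(α e^{-rα})`. -/
theorem robin_interval_first_eigenvalue_asymptotics :
    ∃ C M : ℝ, 0 < C ∧ 0 < M ∧ ∀ α r : ℝ, 0 < α → 0 < r → M ≤ r * α →
      (ET1 α r 1 < 0 ∧ 0 ≤ ET1 α r 2) ∧
      |ET1 α r 1 + α ^ 2| ≤ C * α ^ 2 * Real.exp (-(r * α)) ∧
      ∀ ψ : ℝ → ℝ, ContDiff ℝ 2 ψ → ψ r = 0 → deriv ψ 0 = -α * ψ 0 →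
        (∀ t ∈ Set.Ioo (0:ℝ) r, -(iteratedDeriv 2 ψ t) = ET1 α r 1 * ψ t) →
        NI r ψ = 1 →
        |(ψ 0) ^ 2 - 2 * α| ≤ C * α * Real.exp (-(r * α)) := by
  refine ⟨300, 11, by norm_num, by norm_num, fun α r hα hr hM => ?_⟩
  set X : ℝ := r * α with hX
  set κ : ℝ := Real.exp (-X) with hκ
  have hκ0 : 0 < κ := Real.exp_pos _
  obtain ⟨hk1, hk3, hk4, hk6⟩ := kappa_facts X hM
  rw [← hκ] at hk1 hk3 hk4 hk6
  clear_value X κ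
  have hX0 : (0:ℝ) < X := by nlinarith
  have hX2 : (121:ℝ) ≤ X^2 := by nlinarith
  have hX3 : (1331:ℝ) ≤ X^3 := by nlinarith
  have hκs : κ ≤ 6/1331 := by nlinarith
  have hk4' : X^4 * κ ≤ 6 := by
    nlinarith [mul_le_mul_of_nonneg_right hX2 (mul_nonneg (pow_nonneg hX0.le 4) hκ0.le)]
  -- the trial function
  obtain ⟨f, hdom, hfd, hkey, hNlb⟩ := trial_bound α r hα hr (hX ▸ hM)
  have hN0 : 0 < NI r f := lt_of_lt_of_le (by positivity) hNlb
  have hεκ : Real.exp (-(α*r)) = κ := by rw [hκ, hX, mul_comm r α]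
  rw [hεκ] at hkey
  -- the sets
  set S1 := {E : ℝ | ∃ V : Submodule ℝ (ℝ → ℝ), (V : Set (ℝ → ℝ)) ⊆ domRD r ∧
      Module.finrank ℝ ↥V = 1 ∧ (∀ u ∈ V, NI r u = 0 → u = 0) ∧
      ∀ u ∈ V, tForm α r u ≤ E * NI r u} with hS1
  have hET1 : ET1 α r 1 = sInf S1 := rfl
  have hbdd : BddBelow S1 := ⟨-(α^2), fun E hE => mem_lb α r hα hr 1 one_pos E hE⟩
  have hmem : tForm α r f / NI r f ∈ S1 := mem_S1 α r hr f hdom hfd hN0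
  have hlow : -(α^2) ≤ ET1 α r 1 := by
    rw [hET1]
    exact le_csInf ⟨_, hmem⟩ (fun E hE => mem_lb α r hα hr 1 one_pos E hE)
  have hup : ET1 α r 1 ≤ tForm α r f / NI r f := by
    rw [hET1]; exact csInf_le hbdd hmem
  -- bound the Rayleigh quotient
  have hq : tForm α r f / NI r f + α^2 ≤ 32/3 * X^3 * κ^2 * α^2 := by
    have h1 : tForm α r f / NI r f + α^2 = (α^4 * κ^2 * r^3 / 3) / NI r f := by
      field_simp
      linear_combination 3 * hkey
    rw [h1, div_le_iff₀ hN0]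
    calc α^4*κ^2*r^3/3 = 32/3 * X^3*κ^2*α^2 * (1/(32*α)) := by
          rw [hX]; field_simp
      _ ≤ 32/3 * X^3*κ^2*α^2 * NI r f := by
          apply mul_le_mul_of_nonneg_left hNlb
          positivity
  set e : ℝ := ET1 α r 1 + α^2 with he
  clear_value e
  have he0 : 0 ≤ e := by rw [he]; linarith
  have heB : e ≤ 32/3 * X^3 * κ^2 * α^2 := by rw [he]; linarith
  have hlow' : 0 ≤ e := he0
  clear hq hup hmem hbdd hET1 hkey hNlb hN0 hdom hfd hεκ
  clear_value S1
  clear hS1 S1 f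
  have he64 : e ≤ 64 * κ * α^2 := by
    nlinarith [mul_le_mul_of_nonneg_right hk3 (mul_nonneg hκ0.le (sq_nonneg α))]
  have hneg : ET1 α r 1 < 0 := by
    have : 64 * κ * α^2 < α^2 := by nlinarith
    rw [show ET1 α r 1 = e - α^2 by rw [he]; ring]
    linarith
  have habs : |e| ≤ 300 * α ^ 2 * κ := by
    rw [abs_of_nonneg he0]
    nlinarith [he64, mul_nonneg hκ0.le (sq_nonneg α)]
  refine ⟨⟨hneg, ET2_nonneg α r hα hr⟩, habs, ?_⟩
  -- eigenfunction part
  intro ψ hψ hψr hψ0 hode hNψ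
  have hid := psi_identity α r (ET1 α r 1) hα hr ψ hψ hψr hψ0 hode hNψ
  rw [← he] at hid
  have hre : r * e ≤ α / 2 := by
    have h1 : r * e ≤ r * (32/3 * X^3 * κ^2 * α^2) := mul_le_mul_of_nonneg_left heB hr.le
    have h2 : r * (32/3 * X^3 * κ^2 * α^2) = 32/3 * (X^4 * κ) * κ * α := by
      rw [hX]; ring
    have h3 : 32/3 * (X^4 * κ) * κ * α ≤ 32/3 * 6 * κ * α := by
      nlinarith [mul_le_mul_of_nonneg_right hk4' (mul_nonneg hκ0.le hα.le)]
    have h4 : 32/3 * 6 * κ * α ≤ α/2 := by nlinarith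
    linarith [h1, h2 ▸ h1]
  have hD : α/2 ≤ α - r * e := by linarith
  have hkey2 : (ψ 0 ^ 2 - 2*α) * (α - r*e) = 2*e*(X - 1) := by
    rw [hX]
    linear_combination hid
  have h2e : 0 ≤ 2*e*(X - 1) :=
    mul_nonneg (mul_nonneg (by norm_num) he0) (by linarith)
  have hDpos : 0 < α - r * e := by linarith
  have hψpos : 0 ≤ ψ 0 ^ 2 - 2*α := by
    nlinarith [h2e, hkey2, hDpos]
  have hupper : ψ 0 ^ 2 - 2*α ≤ 300 * α * κ := by
    have h5 : (ψ 0 ^ 2 - 2*α) * (α/2) ≤ (ψ 0 ^ 2 - 2*α) * (α - r*e) :=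
      mul_le_mul_of_nonneg_left hD hψpos
    rw [hkey2] at h5
    have h6 : 2*e*(X-1) ≤ 2*e*X := by nlinarith [he0]
    have h7 : 2*e*X ≤ 2*X*(32/3 * X^3 * κ^2 * α^2) := by
      nlinarith [mul_le_mul_of_nonneg_left heB hX0.le]
    have h8 : 2*X*(32/3 * X^3 * κ^2 * α^2) = 64/3 * (X^4*κ) * κ * α^2 := by ring
    have h9 : 64/3 * (X^4*κ) * κ * α^2 ≤ 64/3 * 6 * κ * α^2 := by
      nlinarith [mul_le_mul_of_nonneg_right hk4' (mul_nonneg hκ0.le (sq_nonneg α))]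
    have h10 : (ψ 0 ^ 2 - 2*α) * (α/2) ≤ 128 * κ * α^2 := by
      rw [h8] at h7
      linarith
    nlinarith [h10, hα, hκ0, mul_pos hκ0 (mul_pos hα hα)]
  rw [abs_of_nonneg hψpos]
  linarith
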